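/- Let e_1, …, e_m be nonnegative random variables and Y_1, …, Y_m real random variables on a common probability space such that E[e_i · 1{Y_i ≤ 0}] ≤ 1 for every i = 1, …, m, and let α ∈ (0,1). Let R be a random subset of {1, …, m} (i.e., each indicator 1{i ∈ R} is a random variable) that is almost surely self-consistent with respect to e_1, …, e_m at level α. Then E[ #{i ∈ R : Y_i ≤ 0} / max(1, |R|) ] ≤ α. -/

import Mathlib

open MeasureTheory

/-- FDR control of self-consistent selection sets with respect to e-values for the random
null events `{Y i ≤ 0}`: if `E[e i · 1{Y i ≤ 0}] ≤ 1` for every `i` and the random set `R`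
is almost surely self-consistent (`e i ≥ m/(α·|R|)` for all `i ∈ R`), then
`E[#{i ∈ R : Y i ≤ 0}/max(1,|R|)] ≤ α`. -/
theorem stmt_2 {Ω : Type*} [MeasureSpace Ω] [IsProbabilityMeasure (volume : Measure Ω)]
    (m : ℕ) (hm : 1 ≤ m) (α : ℝ) (hα : α ∈ Set.Ioo (0 : ℝ) 1)
    (e : Fin m → Ω → ℝ) (Y : Fin m → Ω → ℝ)
    (hemeas : ∀ i, Measurable (e i)) (hYmeas : ∀ i, Measurable (Y i))
    (henonneg : ∀ i ω, 0 ≤ e i ω)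
    (he : ∀ i, ∫⁻ ω, ENNReal.ofReal (e i ω * (if Y i ω ≤ 0 then 1 else 0)) ∂volume ≤ 1)
    (R : Ω → Finset (Fin m))
    (hRmeas : ∀ i, MeasurableSet {ω | i ∈ R ω})
    (hsc : ∀ᵐ ω ∂volume, ∀ i ∈ R ω, (m : ℝ) / (α * ((R ω).card : ℝ)) ≤ e i ω) :
    ∫⁻ ω, ENNReal.ofReal
        ((((R ω).filter fun i => Y i ω ≤ 0).card : ℝ) / max 1 ((R ω).card : ℝ)) ∂volume
      ≤ ENNReal.ofReal α := by
  obtain ⟨hα0, hα1⟩ := hα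
  have hm0 : (0:ℝ) < m := by exact_mod_cast hm
  set c : ℝ := α / m with hc
  have hc0 : 0 < c := div_pos hα0 hm0
  have key : ∀ᵐ ω ∂volume,
      ENNReal.ofReal ((((R ω).filter fun i => Y i ω ≤ 0).card : ℝ) / max 1 ((R ω).card : ℝ))
        ≤ ENNReal.ofReal (c * ∑ i, e i ω * (if Y i ω ≤ 0 then 1 else 0)) := by
    filter_upwards [hsc] with ω hω
    apply ENNReal.ofReal_le_ofReal
    rcases eq_or_ne (R ω) ∅ with h | h
    · have hsum0 : (0:ℝ) ≤ ∑ i, e i ω * (if Y i ω ≤ 0 then 1 else 0) := by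
        apply Finset.sum_nonneg
        intro i _
        split
        · simpa using henonneg i ω
        · simp
      rw [h]
      simp only [Finset.filter_empty, Finset.card_empty, Nat.cast_zero, zero_div,
        ENNReal.ofReal_zero]
      exact mul_nonneg hc0.le hsum0
    · have hcard : 0 < (R ω).card := Finset.card_pos.2 (Finset.nonempty_iff_ne_empty.2 h)
      have hcardR : (0:ℝ) < ((R ω).card : ℝ) := by exact_mod_cast hcard
      have hmax : max 1 ((R ω).card : ℝ) = ((R ω).card : ℝ) := by
        apply max_eq_right
        exact_mod_cast hcard
      set k := ((R ω).filter fun i => Y i ω ≤ 0).card with hk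
      have hsum : (k:ℝ) * ((m:ℝ) / (α * ((R ω).card : ℝ)))
          ≤ ∑ i, e i ω * (if Y i ω ≤ 0 then 1 else 0) := by
        calc (k:ℝ) * ((m:ℝ) / (α * ((R ω).card : ℝ)))
            = ∑ _i ∈ (R ω).filter (fun i => Y i ω ≤ 0), (m:ℝ)/(α * ((R ω).card : ℝ)) := by
              rw [Finset.sum_const, nsmul_eq_mul]
          _ ≤ ∑ i ∈ (R ω).filter (fun i => Y i ω ≤ 0),
                e i ω * (if Y i ω ≤ 0 then 1 else 0) := by
              apply Finset.sum_le_sum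
              intro i hi
              rw [Finset.mem_filter] at hi
              rw [if_pos hi.2, mul_one]
              exact hω i hi.1
          _ ≤ ∑ i, e i ω * (if Y i ω ≤ 0 then 1 else 0) := by
              apply Finset.sum_le_sum_of_subset_of_nonneg (Finset.subset_univ _)
              intro i _ _
              split
              · simpa using henonneg i ω
              · simp
      rw [hmax]
      have heq : (k:ℝ)/((R ω).card : ℝ) = c * ((k:ℝ) * ((m:ℝ) / (α * ((R ω).card : ℝ)))) := by
        rw [hc]
        field_simp
      rw [heq]
      exact mul_le_mul_of_nonneg_left hsum hc0.le
  have hterm : ∀ i : Fin m, Measurable (fun ω => ENNReal.ofReal (e i ω * (if Y i ω ≤ 0 then 1 else 0))) := by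
    intro i
    exact ((hemeas i).mul (Measurable.ite (measurableSet_le (hYmeas i) measurable_const)
      measurable_const measurable_const)).ennreal_ofReal
  calc ∫⁻ ω, ENNReal.ofReal
        ((((R ω).filter fun i => Y i ω ≤ 0).card : ℝ) / max 1 ((R ω).card : ℝ)) ∂volume
      ≤ ∫⁻ ω, ENNReal.ofReal (c * ∑ i, e i ω * (if Y i ω ≤ 0 then 1 else 0)) ∂volume :=
        lintegral_mono_ae key
    _ = ∫⁻ ω, ENNReal.ofReal c *
          (∑ i, ENNReal.ofReal (e i ω * (if Y i ω ≤ 0 then 1 else 0))) ∂volume := by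
        congr 1
        funext ω
        rw [ENNReal.ofReal_mul hc0.le, ENNReal.ofReal_sum_of_nonneg]
        intro i _
        split
        · simpa using henonneg i ω
        · simp
    _ = ENNReal.ofReal c *
          ∫⁻ ω, ∑ i, ENNReal.ofReal (e i ω * (if Y i ω ≤ 0 then 1 else 0)) ∂volume :=
        lintegral_const_mul' _ _ ENNReal.ofReal_ne_top
    _ = ENNReal.ofReal c *
          ∑ i, ∫⁻ ω, ENNReal.ofReal (e i ω * (if Y i ω ≤ 0 then 1 else 0)) ∂volume := by
        rw [lintegral_finset_sum _ (fun i _ => hterm i)]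
    _ ≤ ENNReal.ofReal c * ∑ _i : Fin m, (1:ENNReal) := by
        gcongr with i
        exact he i
    _ = ENNReal.ofReal c * (m : ENNReal) := by simp
    _ = ENNReal.ofReal α := by
        rw [← ENNReal.ofReal_natCast m, ← ENNReal.ofReal_mul hc0.le, hc]
        congr 1
        field_simp
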